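/- Every graph of clique-width at most k has NLC-width at most k. -/

import Mathlib

open SimpleGraph

/-- Edge insertion `η_{a,b}`: add all edges between vertices labeled `a` and `b`. -/
def etaG {V : Type} {k : ℕ} (G : SimpleGraph V) (lab : V → Fin k) (a b : Fin k) :
    SimpleGraph V where
  Adj x y := G.Adj x y ∨ (x ≠ y ∧ ((lab x = a ∧ lab y = b) ∨ (lab x = b ∧ lab y = a)))
  symm := by
    constructor
    intro x y h
    rcases h with h | ⟨hxy, h⟩
    · exact Or.inl h.symm
    · rcases h with ⟨h1,h2⟩|⟨h1,h2⟩
      · exact Or.inr ⟨hxy.symm, Or.inr ⟨h2,h1⟩⟩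
      · exact Or.inr ⟨hxy.symm, Or.inl ⟨h2,h1⟩⟩
  loopless := by
    constructor
    intro x h
    rcases h with h | ⟨hxx, _⟩
    · exact G.loopless.irrefl x h
    · exact hxx rfl

/-- NLC-width union operation `×_S`. -/
def nlcJoin {V W : Type} {k : ℕ} (G : SimpleGraph V) (H : SimpleGraph W)
    (labG : V → Fin k) (labH : W → Fin k) (S : Set (Fin k × Fin k)) :
    SimpleGraph (V ⊕ W) where
  Adj x y := match x, y with
    | .inl a, .inl b => G.Adj a b
    | .inr a, .inr b => H.Adj a b
    | .inl a, .inr b => (labG a, labH b) ∈ S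
    | .inr a, .inl b => (labG b, labH a) ∈ S
  symm := by
    constructor
    rintro (a | a) (b | b) h
    · exact G.symm.symm _ _ h
    · exact h
    · exact h
    · exact H.symm.symm _ _ h
  loopless := by
    constructor
    rintro (a | a) h
    · exact G.loopless.irrefl a h
    · exact H.loopless.irrefl a h

/-- Labeled graphs constructible by clique-width operations with labels in `Fin k`. -/
inductive CWBuild (k : ℕ) : {V : Type} → SimpleGraph V → (V → Fin k) → Prop
  | single (a : Fin k) : CWBuild k (⊥ : SimpleGraph PUnit) (fun _ => a)
  | union {V W : Type} {G : SimpleGraph V} {H : SimpleGraph W}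
      {labG : V → Fin k} {labH : W → Fin k} :
      CWBuild k G labG → CWBuild k H labH →
      CWBuild k (G ⊕g H) (Sum.elim labG labH)
  | insertEdges {V : Type} {G : SimpleGraph V} {lab : V → Fin k} (a b : Fin k)
      (hab : a ≠ b) : CWBuild k G lab → CWBuild k (etaG G lab a b) lab
  | relabel {V : Type} {G : SimpleGraph V} {lab : V → Fin k} (a b : Fin k) :
      CWBuild k G lab → CWBuild k G (fun v => if lab v = a then b else lab v)

/-- `G` is definable by a clique-width `k`-expression. -/
def HasCW (k : ℕ) {V : Type} (G : SimpleGraph V) : Prop :=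
  ∃ (W : Type) (H : SimpleGraph W) (lab : W → Fin k),
    CWBuild k H lab ∧ Nonempty (G ≃g H)

/-- The clique-width of `G`. -/
noncomputable def cliquewidth {V : Type} (G : SimpleGraph V) : ℕ :=
  sInf {k | HasCW k G}

/-- Labeled graphs constructible by NLC-width operations with labels in `Fin k`. -/
inductive NLCBuild (k : ℕ) : {V : Type} → SimpleGraph V → (V → Fin k) → Prop
  | single (a : Fin k) : NLCBuild k (⊥ : SimpleGraph PUnit) (fun _ => a)
  | join {V W : Type} {G : SimpleGraph V} {H : SimpleGraph W}
      {labG : V → Fin k} {labH : W → Fin k} (S : Set (Fin k × Fin k)) :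
      NLCBuild k G labG → NLCBuild k H labH →
      NLCBuild k (nlcJoin G H labG labH S) (Sum.elim labG labH)
  | relabel {V : Type} {G : SimpleGraph V} {lab : V → Fin k} (R : Fin k → Fin k) :
      NLCBuild k G lab → NLCBuild k G (R ∘ lab)

/-- `G` is definable by an NLC-width `k`-expression. -/
def HasNLC (k : ℕ) {V : Type} (G : SimpleGraph V) : Prop :=
  ∃ (W : Type) (H : SimpleGraph W) (lab : W → Fin k),
    NLCBuild k H lab ∧ Nonempty (G ≃g H)

/-- The NLC-width of `G`. -/
noncomputable def nlcwidth {V : Type} (G : SimpleGraph V) : ℕ :=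
  sInf {k | HasNLC k G}

/-- Generalized edge insertion along a set of label pairs. -/
def etaS {V : Type} {k : ℕ} (G : SimpleGraph V) (lab : V → Fin k)
    (P : Set (Fin k × Fin k)) : SimpleGraph V where
  Adj x y := G.Adj x y ∨ (x ≠ y ∧ ((lab x, lab y) ∈ P ∨ (lab y, lab x) ∈ P))
  symm := by
    constructor
    intro x y h
    rcases h with h | ⟨hxy, h⟩
    · exact Or.inl h.symm
    · exact Or.inr ⟨hxy.symm, h.symm⟩
  loopless := by
    constructor
    intro x h
    rcases h with h | ⟨hxx, _⟩
    · exact G.loopless.irrefl x h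
    · exact hxx rfl

lemma nlc_etaS {k : ℕ} : ∀ {V : Type} {G : SimpleGraph V} {lab : V → Fin k},
    NLCBuild k G lab → ∀ P : Set (Fin k × Fin k), NLCBuild k (etaS G lab P) lab := by
  intro V G lab h
  induction h with
  | single a =>
      intro P
      have : etaS (⊥ : SimpleGraph PUnit) (fun _ => a) P = (⊥ : SimpleGraph PUnit) := by
        ext x y
        cases x; cases y
        simp [etaS]
      rw [this]
      exact NLCBuild.single a
  | join S hG hH ihG ihH =>
      intro P
      rename_i V W G' H' labG labH
      have key : etaS (nlcJoin G' H' labG labH S) (Sum.elim labG labH) P =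
          nlcJoin (etaS G' labG P) (etaS H' labH P) labG labH
            (S ∪ {p | p ∈ P ∨ (p.2, p.1) ∈ P}) := by
        ext x y
        rcases x with x | x <;> rcases y with y | y <;>
          simp [etaS, nlcJoin, Set.mem_union, Set.mem_setOf_eq] <;> tauto
      rw [key]
      exact NLCBuild.join _ (ihG P) (ihH P)
  | relabel R hG ih =>
      intro P
      rename_i V G' lab'
      have key : etaS G' (R ∘ lab') P = etaS G' lab' {q | (R q.1, R q.2) ∈ P} := by
        ext x y
        simp [etaS, Set.mem_setOf_eq, Function.comp]
      rw [key]
      exact NLCBuild.relabel R (ih _)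

lemma cw_to_nlc {k : ℕ} : ∀ {V : Type} {G : SimpleGraph V} {lab : V → Fin k},
    CWBuild k G lab → NLCBuild k G lab := by
  intro V G lab h
  induction h with
  | single a => exact NLCBuild.single a
  | union hG hH ihG ihH =>
      rename_i V W G' H' labG labH
      have key : G' ⊕g H' = nlcJoin G' H' labG labH ∅ := by
        ext x y
        rcases x with x | x <;> rcases y with y | y <;> simp [nlcJoin, SimpleGraph.sum]
      rw [key]
      exact NLCBuild.join ∅ ihG ihH
  | insertEdges a b hab hG ih =>
      rename_i V G' lab'
      have key : etaG G' lab' a b = etaS G' lab' {(a, b)} := by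
        ext x y
        simp [etaG, etaS, Set.mem_singleton_iff, Prod.ext_iff]
        tauto
      rw [key]
      exact nlc_etaS ih _
  | relabel a b hG ih =>
      exact NLCBuild.relabel (fun c => if c = a then b else c) ih

lemma nlc_nonempty {k : ℕ} : ∀ {V : Type} {G : SimpleGraph V} {lab : V → Fin k},
    NLCBuild k G lab → Nonempty V := by
  intro V G lab h
  induction h with
  | single a => exact ⟨PUnit.unit⟩
  | join S hG hH ihG ihH => exact ⟨Sum.inl ihG.some⟩
  | relabel R hG ih => exact ih

/-- Edge insertion between a set of labels and a fixed label. -/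
def etaSet {V : Type} {k : ℕ} (G : SimpleGraph V) (lab : V → Fin k)
    (s : Finset (Fin k)) (b : Fin k) : SimpleGraph V where
  Adj x y := G.Adj x y ∨ (x ≠ y ∧ ((lab x ∈ s ∧ lab y = b) ∨ (lab y ∈ s ∧ lab x = b)))
  symm := by
    constructor
    intro x y h
    rcases h with h | ⟨hxy, h⟩
    · exact Or.inl h.symm
    · exact Or.inr ⟨hxy.symm, h.symm⟩
  loopless := by
    constructor
    intro x h
    rcases h with h | ⟨hxx, _⟩
    · exact G.loopless.irrefl x h
    · exact hxx rfl

lemma cw_etaSet {k : ℕ} {V : Type} {G : SimpleGraph V} {lab : V → Fin k}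
    (h : CWBuild k G lab) (s : Finset (Fin k)) (b : Fin k) (hb : b ∉ s) :
    CWBuild k (etaSet G lab s b) lab := by
  induction s using Finset.induction_on with
  | empty =>
      have : etaSet G lab ∅ b = G := by
        ext x y; simp [etaSet]
      rw [this]; exact h
  | @insert a s ha ih =>
      have hab : a ≠ b := fun e => hb (by simp [e])
      have hbs : b ∉ s := fun e => hb (by simp [e])
      have key : etaSet G lab (insert a s) b = etaG (etaSet G lab s b) lab a b := by
        ext x y
        simp only [etaSet, etaG, Finset.mem_insert]
        tauto
      rw [key]
      exact CWBuild.insertEdges a b hab (ih hbs)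

lemma buildAll : ∀ (n : ℕ) (V : Type) [Fintype V], Fintype.card V = n → Nonempty V →
    ∀ (k : ℕ) (f : V ↪ Fin k) (G : SimpleGraph V),
    ∃ (W : Type) (H : SimpleGraph W) (lab : W → Fin k) (e : G ≃g H),
      CWBuild k H lab ∧ ∀ v, lab (e v) = f v := by
  intro n
  induction n using Nat.strong_induction_on with
  | _ n IH =>
    intro V _ hcard hne k f G
    classical
    obtain ⟨v0⟩ := hne
    by_cases hsub : ∀ v : V, v = v0
    · -- singleton case
      refine ⟨PUnit, ⊥, fun _ => f v0, ?_, CWBuild.single (f v0), ?_⟩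
      · refine ⟨⟨fun _ => PUnit.unit, fun _ => v0, fun v => (hsub v).symm, fun u => rfl⟩, ?_⟩
        intro u v
        simp only [Equiv.coe_fn_mk]
        constructor
        · intro h; exact absurd h (by simp)
        · intro h
          exact absurd (G.ne_of_adj h) (by rw [hsub u, hsub v]; simp)
      · intro v; rw [hsub v]
    · -- inductive case
      push_neg at hsub
      obtain ⟨v1, hv1⟩ := hsub
      set V' := {v : V // v ≠ v0} with hV'
      have hcard' : Fintype.card V' < n := by
        rw [← hcard]
        exact Fintype.card_subtype_lt (p := fun v => v ≠ v0) (x := v0) (by simp)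
      have hne' : Nonempty V' := ⟨⟨v1, hv1⟩⟩
      obtain ⟨W', H', lab', e', build', hlab'⟩ :=
        IH (Fintype.card V') hcard' V' rfl hne' k
          ((Function.Embedding.subtype _).trans f) (G.comap (Function.Embedding.subtype _))
      -- key facts about lab'
      have lab'_eq : ∀ w : W', lab' w = f ((e'.symm w : V') : V) := by
        intro w
        have h := hlab' (e'.symm w)
        rw [show e' (e'.symm w) = w from e'.apply_symm_apply w] at h
        exact h
      have lab'_ne : ∀ w : W', lab' w ≠ f v0 := by
        intro w h
        rw [lab'_eq w] at h
        exact (e'.symm w).2 (f.injective h)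
      set s := (G.neighborFinset v0).image f with hs
      have hbs : f v0 ∉ s := by
        intro h
        rw [hs, Finset.mem_image] at h
        obtain ⟨u, hu, hfu⟩ := h
        have : u = v0 := f.injective hfu
        rw [this] at hu
        exact G.loopless.irrefl v0 (by rwa [SimpleGraph.mem_neighborFinset] at hu)
      have mem_s : ∀ w : W', (lab' w ∈ s ↔ G.Adj v0 ((e'.symm w : V') : V)) := by
        intro w
        rw [lab'_eq w, hs, Finset.mem_image]
        constructor
        · rintro ⟨u, hu, hfu⟩
          have : u = ((e'.symm w : V') : V) := f.injective hfu
          rw [← this]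
          rwa [SimpleGraph.mem_neighborFinset] at hu
        · intro h
          exact ⟨_, by rwa [SimpleGraph.mem_neighborFinset], rfl⟩
      set labB : W' ⊕ PUnit → Fin k := Sum.elim lab' (fun _ => f v0) with hlabB
      have buildB : CWBuild k ((H' ⊕g (⊥ : SimpleGraph PUnit))) labB :=
        CWBuild.union build' (CWBuild.single (f v0))
      set H : SimpleGraph (W' ⊕ PUnit) := etaSet (H' ⊕g (⊥ : SimpleGraph PUnit)) labB s (f v0)
        with hH
      have buildH : CWBuild k H labB := cw_etaSet buildB s (f v0) hbs
      -- the equivalence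
      let e : V ≃ (W' ⊕ PUnit) := {
        toFun := fun v => if h : v = v0 then Sum.inr PUnit.unit else Sum.inl (e' ⟨v, h⟩)
        invFun := Sum.elim (fun w => ((e'.symm w : V') : V)) (fun _ => v0)
        left_inv := by
          intro v
          by_cases h : v = v0
          · simp [h]
          · simp only [h, dif_neg, not_false_iff, Sum.elim_inl]
            rw [e'.symm_apply_apply]
        right_inv := by
          rintro (w | u)
          · simp only [Sum.elim_inl]
            have hne : ((e'.symm w : V') : V) ≠ v0 := (e'.symm w).2
            show (if h : ((e'.symm w : V') : V) = v0 then (Sum.inr PUnit.unit : W' ⊕ PUnit) else Sum.inl (e' ⟨_, h⟩)) = Sum.inl w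
            rw [dif_neg hne]
            congr 1
            rw [show (⟨((e'.symm w : V') : V), hne⟩ : V') = e'.symm w from Subtype.ext rfl]
            exact e'.apply_symm_apply w
          · simp }
      have e_v0 : e v0 = Sum.inr PUnit.unit := by simp [e]
      have e_ne : ∀ (v : V) (h : v ≠ v0), e v = Sum.inl (e' ⟨v, h⟩) := by
        intro v h; simp [e, h]
      refine ⟨W' ⊕ PUnit, H, labB, ⟨e, ?_⟩, buildH, ?_⟩
      · -- adjacency
        intro u v
        show H.Adj (e u) (e v) ↔ G.Adj u v
        by_cases hu : u = v0 <;> by_cases hv : v = v0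
        · rw [hu, hv, e_v0]
          constructor
          · intro h; exact absurd rfl (H.ne_of_adj h)
          · intro h; exact absurd h (G.loopless.irrefl v0)
        · rw [hu, e_v0, e_ne v hv]
          show (etaSet _ _ _ _).Adj (Sum.inr PUnit.unit) (Sum.inl (e' ⟨v, hv⟩)) ↔ _
          simp only [etaSet, SimpleGraph.sum_adj, hlabB, Sum.elim_inl, Sum.elim_inr]
          have h2 : f v0 ∉ s := hbs
          have h3 := mem_s (e' ⟨v, hv⟩)
          rw [e'.symm_apply_apply] at h3
          constructor
          · rintro (h | ⟨_, (⟨hmem, heq⟩ | ⟨hmem, heq⟩)⟩)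
            · exact absurd h (by simp)
            · exact absurd hmem h2
            · exact h3.mp hmem
          · intro h
            exact Or.inr ⟨by simp, Or.inr ⟨h3.mpr h, trivial⟩⟩
        · rw [hv, e_v0, e_ne u hu]
          show (etaSet _ _ _ _).Adj (Sum.inl (e' ⟨u, hu⟩)) (Sum.inr PUnit.unit) ↔ _
          simp only [etaSet, SimpleGraph.sum_adj, hlabB, Sum.elim_inl, Sum.elim_inr]
          have h2 : f v0 ∉ s := hbs
          have h3 := mem_s (e' ⟨u, hu⟩)
          rw [e'.symm_apply_apply] at h3
          constructor
          · rintro (h | ⟨_, (⟨hmem, heq⟩ | ⟨hmem, heq⟩)⟩)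
            · exact absurd h (by simp)
            · exact (h3.mp hmem).symm
            · exact absurd hmem h2
          · intro h
            exact Or.inr ⟨by simp, Or.inl ⟨h3.mpr h.symm, trivial⟩⟩
        · rw [e_ne u hu, e_ne v hv]
          show (etaSet _ _ _ _).Adj (Sum.inl (e' ⟨u, hu⟩)) (Sum.inl (e' ⟨v, hv⟩)) ↔ _
          simp only [etaSet, SimpleGraph.sum_adj, hlabB, Sum.elim_inl]
          have h1 : lab' (e' ⟨u, hu⟩) ≠ f v0 := lab'_ne _
          have h2 : lab' (e' ⟨v, hv⟩) ≠ f v0 := lab'_ne _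
          have hiff : H'.Adj (e' ⟨u, hu⟩) (e' ⟨v, hv⟩) ↔ G.Adj u v := by
            rw [e'.map_adj_iff]
            rfl
          constructor
          · rintro (h | ⟨_, (⟨_, heq⟩ | ⟨_, heq⟩)⟩)
            · exact hiff.mp h
            · exact absurd heq h2
            · exact absurd heq h1
          · intro h
            exact Or.inl (hiff.mpr h)
      · intro v
        show labB (e v) = f v
        by_cases h : v = v0
        · rw [h, e_v0]; rfl
        · rw [e_ne v h]
          show lab' (e' ⟨v, h⟩) = f v
          have := hlab' ⟨v, h⟩
          exact this

/-- Every graph of clique-width at most `k` has NLC-width at most `k`. -/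
theorem nlcwidth_le_of_cliquewidth_le {V : Type} [Fintype V] (G : SimpleGraph V)
    (k : ℕ) (h : cliquewidth G ≤ k) : nlcwidth G ≤ k := by
  by_cases hS : {m | HasCW m G}.Nonempty
  · have hmem : HasCW (cliquewidth G) G := Nat.sInf_mem hS
    obtain ⟨W, H, lab, hb, ⟨iso⟩⟩ := hmem
    have hnlc : HasNLC (cliquewidth G) G := ⟨W, H, lab, cw_to_nlc hb, ⟨iso⟩⟩
    calc nlcwidth G ≤ cliquewidth G := Nat.sInf_le hnlc
      _ ≤ k := h
  · have hempty : {m | HasNLC m G} = ∅ := by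
      rw [Set.eq_empty_iff_forall_notMem]
      intro m hm
      obtain ⟨W, H, lab, hb, ⟨iso⟩⟩ := hm
      have hW : Nonempty W := nlc_nonempty hb
      have hV : Nonempty V := ⟨iso.toEquiv.symm hW.some⟩
      obtain ⟨W', H', lab', e', hb', -⟩ :=
        buildAll (Fintype.card V) V rfl hV (Fintype.card V) (Fintype.equivFin V).toEmbedding G
      exact hS ⟨Fintype.card V, W', H', lab', hb', ⟨e'⟩⟩
    unfold nlcwidth
    rw [hempty, Nat.sInf_empty]
    exact Nat.zero_le k
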